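/- For every natural number n and every nonzero real number z, the characteristic polynomial of the symmetric Pascal matrix Q_n satisfies det(z·I − Q_n) = (−1)^{n+1} · z^{n+1} · det((1/z)·I − Q_n). Consequently the eigenvalues of Q_n come in reciprocal pairs: if q is an eigenvalue of Q_n then so is 1/q. -/

import Mathlib

open Matrix Finset

/-- The symmetric Pascal matrix `Q_n`, with entries `choose (i+j) j`, viewed as a real matrix. -/
def pascalQR (n : ℕ) : Matrix (Fin (n+1)) (Fin (n+1)) ℝ :=
  Matrix.of fun i j => (Nat.choose (i.val + j.val) j.val : ℝ)

def pascalPR (n : ℕ) : Matrix (Fin (n+1)) (Fin (n+1)) ℝ :=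
  Matrix.of fun i j => (Nat.choose i.val j.val : ℝ)

def pascalDR (n : ℕ) : Matrix (Fin (n+1)) (Fin (n+1)) ℝ :=
  Matrix.diagonal fun i => (-1 : ℝ) ^ (i : ℕ)

lemma vandermonde_sum (n i j : ℕ) (hj : j ≤ n) :
    ∑ k ∈ Finset.range (n+1), Nat.choose i k * Nat.choose j k = Nat.choose (i+j) j := by
  have h := Nat.add_choose_eq i j j
  rw [Finset.Nat.sum_antidiagonal_eq_sum_range_succ_mk] at h
  have h2 : ∑ k ∈ range (j+1), i.choose k * j.choose (j-k)
      = ∑ k ∈ range (j+1), i.choose k * j.choose k :=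
    Finset.sum_congr rfl fun k hk => by
      rw [Nat.choose_symm (Nat.lt_succ_iff.mp (Finset.mem_range.mp hk))]
  rw [h, h2]
  symm
  apply Finset.sum_subset (Finset.range_subset_range.2 (Nat.succ_le_succ hj))
  intro k _ hk'
  have : j < k := by
    by_contra hc
    exact hk' (Finset.mem_range.2 (Nat.lt_succ_of_le (le_of_not_gt hc)))
  rw [Nat.choose_eq_zero_of_lt this, mul_zero]

lemma alt_sum (n i j : ℕ) (hi : i ≤ n) :
    ∑ k ∈ Finset.range (n+1), (-1:ℝ)^(k+j) * (i.choose k) * (k.choose j)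
      = if i = j then 1 else 0 := by
  by_cases hji : j ≤ i
  · have hsub : Finset.Icc j i ⊆ Finset.range (n+1) := by
      intro k hk
      exact Finset.mem_range.2 (Nat.lt_succ_of_le ((Finset.mem_Icc.mp hk).2.trans hi))
    rw [← Finset.sum_subset hsub (by
      intro k hk hk'
      rcases Nat.lt_or_ge k j with h | h
      · simp [Nat.choose_eq_zero_of_lt h]
      · have : i < k := by
          by_contra hc
          exact hk' (Finset.mem_Icc.2 ⟨h, le_of_not_gt hc⟩)
        simp [Nat.choose_eq_zero_of_lt this])]
    have key : ∀ k ∈ Finset.Icc j i,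
        (-1:ℝ)^(k+j) * (i.choose k) * (k.choose j)
          = (i.choose j : ℝ) * ((-1:ℝ)^(k+j) * ((i-j).choose (k-j))) := by
      intro k hk
      obtain ⟨h1, h2⟩ := Finset.mem_Icc.mp hk
      have := Nat.choose_mul (n := i) h1
      have hcast : (i.choose k : ℝ) * (k.choose j) = (i.choose j : ℝ) * ((i-j).choose (k-j)) := by
        exact_mod_cast congrArg (Nat.cast : ℕ → ℝ) this
      rw [mul_assoc, hcast]; ring
    rw [Finset.sum_congr rfl key, ← Finset.mul_sum]
    have hIcc : Finset.Icc j i = Finset.Ico j (i+1) := by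
      rw [Finset.Ico_add_one_right_eq_Icc]
    rw [hIcc, Finset.sum_Ico_eq_sum_range]
    have hterm : ∀ t ∈ Finset.range (i + 1 - j),
        (-1:ℝ)^((j+t)+j) * ((i-j).choose ((j+t)-j)) = (-1:ℝ)^t * ((i-j).choose t) := by
      intro t _
      have ht : (j+t)-j = t := by omega
      rw [ht]
      have : (-1:ℝ)^((j+t)+j) = (-1:ℝ)^t := by
        rw [show (j+t)+j = t + 2*j by ring, pow_add, pow_mul]
        simp
      rw [this]
    rw [Finset.sum_congr rfl hterm]
    have hrange : i + 1 - j = (i - j) + 1 := by omega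
    rw [hrange]
    have halt : ∑ t ∈ Finset.range ((i-j) + 1), (-1:ℝ)^t * ((i-j).choose t)
        = if i - j = 0 then 1 else 0 := by
      have := Int.alternating_sum_range_choose (n := i - j)
      exact_mod_cast congrArg (Int.cast : ℤ → ℝ) this
    rw [halt]
    by_cases hij : i = j
    · subst hij; simp
    · have : i - j ≠ 0 := by omega
      simp [this, hij]
  · have hij : i ≠ j := by omega
    rw [if_neg hij]
    apply Finset.sum_eq_zero
    intro k _
    rcases Nat.lt_or_ge k j with h | h
    · simp [Nat.choose_eq_zero_of_lt h]
    · have : i < k := by omega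
      simp [Nat.choose_eq_zero_of_lt this]

lemma pascalQR_eq (n : ℕ) : pascalQR n = pascalPR n * (pascalPR n)ᵀ := by
  ext i j
  simp only [pascalQR, pascalPR, Matrix.mul_apply, Matrix.transpose_apply, Matrix.of_apply]
  rw [Fin.sum_univ_eq_sum_range (fun k => ((i.val.choose k : ℝ)) * (j.val.choose k))]
  exact_mod_cast (congrArg (Nat.cast : ℕ → ℝ)
    (vandermonde_sum n i.val j.val (Nat.lt_succ_iff.mp j.isLt))).symm

lemma pascalM_sq (n : ℕ) :
    (pascalPR n * pascalDR n) * (pascalPR n * pascalDR n) = 1 := by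
  ext i j
  have hMD : ∀ a b : Fin (n+1), (pascalPR n * pascalDR n) a b
      = (a.1.choose b.1 : ℝ) * (-1:ℝ)^(b.1) := by
    intro a b
    simp [pascalPR, pascalDR, Matrix.mul_diagonal]
  rw [Matrix.mul_apply]
  have : ∀ k : Fin (n+1), (pascalPR n * pascalDR n) i k * (pascalPR n * pascalDR n) k j
      = (-1:ℝ)^(k.1 + j.1) * (i.1.choose k.1) * (k.1.choose j.1) := by
    intro k
    rw [hMD, hMD, pow_add]
    ring
  rw [Finset.sum_congr rfl (fun k _ => this k)]
  rw [Fin.sum_univ_eq_sum_range (fun k => (-1:ℝ)^(k + j.1) * (i.1.choose k) * (Nat.choose k j.1))]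
  rw [alt_sum n i.1 j.1 (Nat.lt_succ_iff.mp i.isLt)]
  simp [Matrix.one_apply, Fin.ext_iff]

lemma pascalD_sq (n : ℕ) : pascalDR n * pascalDR n = 1 := by
  rw [pascalDR, Matrix.diagonal_mul_diagonal]
  have hf : (fun i : Fin (n+1) => (-1:ℝ)^(i:ℕ) * (-1:ℝ)^(i:ℕ)) = fun _ => (1:ℝ) := by
    funext i
    rw [← pow_add, ← two_mul, pow_mul, neg_one_sq, one_pow]
  rw [hf, Matrix.diagonal_one]

lemma sim_det {N : Type*} [Fintype N] [DecidableEq N] (A B M : Matrix N N ℝ)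
    (hM2 : M * M = 1) (hcomm : M * B = A * M) (z : ℝ) :
    (z • (1 : Matrix N N ℝ) - A).det = (z • (1 : Matrix N N ℝ) - B).det := by
  have e : M * (z • (1 : Matrix N N ℝ) - B) * M = z • (1 : Matrix N N ℝ) - A := by
    calc M * (z • (1 : Matrix N N ℝ) - B) * M = (z • M - M * B) * M := by
          rw [Matrix.mul_sub, Matrix.mul_smul, mul_one]
      _ = (z • M - A * M) * M := by rw [hcomm]
      _ = z • (M * M) - A * (M * M) := by
          rw [Matrix.sub_mul, Matrix.smul_mul, Matrix.mul_assoc]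
      _ = z • (1 : Matrix N N ℝ) - A := by rw [hM2, mul_one]
  have h := congrArg Matrix.det e
  rw [Matrix.det_mul, Matrix.det_mul] at h
  have hMdet : M.det * M.det = 1 := by rw [← Matrix.det_mul, hM2, Matrix.det_one]
  calc (z • (1 : Matrix N N ℝ) - A).det
      = M.det * (z • (1 : Matrix N N ℝ) - B).det * M.det := h.symm
    _ = (M.det * M.det) * (z • (1 : Matrix N N ℝ) - B).det := by ring
    _ = (z • (1 : Matrix N N ℝ) - B).det := by rw [hMdet, one_mul]

lemma pascalP_det (n : ℕ) : (pascalPR n).det = 1 := by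
  rw [Matrix.det_of_lowerTriangular (pascalPR n) (by
    intro i j hij
    simp only [Matrix.BlockTriangular, OrderDual.toDual_lt_toDual] at hij
    simp only [pascalPR, Matrix.of_apply]
    exact_mod_cast congrArg (Nat.cast : ℕ → ℝ) (Nat.choose_eq_zero_of_lt hij))]
  simp [pascalPR]

lemma pascalQ_det (n : ℕ) : (pascalQR n).det = 1 := by
  rw [pascalQR_eq, Matrix.det_mul, Matrix.det_transpose, pascalP_det, mul_one]

theorem pascalQR_reciprocal_eigenvalues (n : ℕ) :
    (∀ z : ℝ, z ≠ 0 →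
      (z • (1 : Matrix (Fin (n+1)) (Fin (n+1)) ℝ) - pascalQR n).det
        = (-1 : ℝ) ^ (n+1) * z ^ (n+1) *
          ((1/z) • (1 : Matrix (Fin (n+1)) (Fin (n+1)) ℝ) - pascalQR n).det) ∧
    (∀ q : ℝ, q ∈ spectrum ℝ (pascalQR n) → 1/q ∈ spectrum ℝ (pascalQR n)) := by
  have hM2 : (pascalPR n * pascalDR n) * (pascalPR n * pascalDR n) = 1 := pascalM_sq n
  have hD2 : pascalDR n * pascalDR n = 1 := pascalD_sq n
  have hQ : pascalQR n = pascalPR n * (pascalPR n)ᵀ := pascalQR_eq n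
  have hdetQ : (pascalQR n).det = 1 := pascalQ_det n
  -- transposed involution
  have hT : (pascalDR n * (pascalPR n)ᵀ) * (pascalDR n * (pascalPR n)ᵀ) = 1 := by
    have h := congrArg Matrix.transpose hM2
    simp only [Matrix.transpose_mul, Matrix.transpose_one, Matrix.diagonal_transpose,
      pascalDR] at h
    rw [show (Matrix.diagonal fun i : Fin (n+1) => (-1:ℝ)^(i:ℕ)) = pascalDR n from rfl] at h
    exact h
  have hPDP : (pascalPR n)ᵀ * pascalDR n * (pascalPR n)ᵀ = pascalDR n := by
    calc (pascalPR n)ᵀ * pascalDR n * (pascalPR n)ᵀ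
        = (pascalDR n * pascalDR n) * ((pascalPR n)ᵀ * pascalDR n * (pascalPR n)ᵀ) := by
          rw [hD2, one_mul]
      _ = pascalDR n * ((pascalDR n * (pascalPR n)ᵀ) * (pascalDR n * (pascalPR n)ᵀ)) := by
          noncomm_ring
      _ = pascalDR n * 1 := by rw [hT]
      _ = pascalDR n := mul_one _
  -- R := D Pᵀ P D is a right inverse of Q
  have hQR : pascalQR n * (pascalDR n * (pascalPR n)ᵀ * pascalPR n * pascalDR n) = 1 := by
    calc pascalQR n * (pascalDR n * (pascalPR n)ᵀ * pascalPR n * pascalDR n)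
        = pascalPR n * ((pascalPR n)ᵀ * pascalDR n * (pascalPR n)ᵀ) *
            (pascalPR n * pascalDR n) := by rw [hQ]; noncomm_ring
      _ = (pascalPR n * pascalDR n) * (pascalPR n * pascalDR n) := by
          rw [hPDP]
      _ = 1 := hM2
  have hMR : (pascalPR n * pascalDR n) * (pascalDR n * (pascalPR n)ᵀ * pascalPR n * pascalDR n)
      = pascalQR n * (pascalPR n * pascalDR n) := by
    calc (pascalPR n * pascalDR n) * (pascalDR n * (pascalPR n)ᵀ * pascalPR n * pascalDR n)
        = pascalPR n * (pascalDR n * pascalDR n) * (pascalPR n)ᵀ *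
            (pascalPR n * pascalDR n) := by noncomm_ring
      _ = pascalPR n * (pascalPR n)ᵀ * (pascalPR n * pascalDR n) := by
          rw [hD2, mul_one]
      _ = pascalQR n * (pascalPR n * pascalDR n) := by rw [hQ]
  have key : ∀ z : ℝ,
      (z • (1 : Matrix (Fin (n+1)) (Fin (n+1)) ℝ) - pascalQR n).det
        = (z • pascalQR n - 1).det := by
    intro z
    rw [sim_det (pascalQR n) (pascalDR n * (pascalPR n)ᵀ * pascalPR n * pascalDR n)
      (pascalPR n * pascalDR n) hM2 hMR z]
    have h3 : pascalQR n *
        (z • (1 : Matrix (Fin (n+1)) (Fin (n+1)) ℝ)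
          - (pascalDR n * (pascalPR n)ᵀ * pascalPR n * pascalDR n))
        = z • pascalQR n - 1 := by
      rw [Matrix.mul_sub, Matrix.mul_smul, mul_one, hQR]
    calc (z • (1 : Matrix (Fin (n+1)) (Fin (n+1)) ℝ)
          - (pascalDR n * (pascalPR n)ᵀ * pascalPR n * pascalDR n)).det
        = (pascalQR n).det * (z • (1 : Matrix (Fin (n+1)) (Fin (n+1)) ℝ)
            - (pascalDR n * (pascalPR n)ᵀ * pascalPR n * pascalDR n)).det := by
          rw [hdetQ, one_mul]
      _ = (pascalQR n * (z • (1 : Matrix (Fin (n+1)) (Fin (n+1)) ℝ)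
            - (pascalDR n * (pascalPR n)ᵀ * pascalPR n * pascalDR n))).det := by
          rw [Matrix.det_mul]
      _ = (z • pascalQR n - 1).det := by rw [h3]
  have main : ∀ z : ℝ, z ≠ 0 →
      (z • (1 : Matrix (Fin (n+1)) (Fin (n+1)) ℝ) - pascalQR n).det
        = (-1 : ℝ) ^ (n+1) * z ^ (n+1) *
          ((1/z) • (1 : Matrix (Fin (n+1)) (Fin (n+1)) ℝ) - pascalQR n).det := by
    intro z hz
    rw [key z]
    have h4 : z • pascalQR n - 1
        = (-1 : ℝ) • (z • ((1/z) • (1 : Matrix (Fin (n+1)) (Fin (n+1)) ℝ) - pascalQR n)) := by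
      rw [smul_sub, smul_smul, mul_one_div, div_self hz, one_smul, neg_one_smul, neg_sub]
    rw [h4, Matrix.det_smul, Matrix.det_smul]
    simp only [Fintype.card_fin]
    ring
  refine ⟨main, ?_⟩
  intro q hq
  rw [spectrum.mem_iff, Algebra.algebraMap_eq_smul_one] at hq ⊢
  have hq0 : q ≠ 0 := by
    rintro rfl
    apply hq
    rw [Matrix.isUnit_iff_isUnit_det]
    have h0 : ((0:ℝ) • (1 : Matrix (Fin (n+1)) (Fin (n+1)) ℝ) - pascalQR n) = -(pascalQR n) := by
      simp
    rw [h0, Matrix.det_neg, pascalQ_det, mul_one]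
    exact isUnit_iff_ne_zero.2 (pow_ne_zero _ (by norm_num))
  have hdet0 : (q • (1 : Matrix (Fin (n+1)) (Fin (n+1)) ℝ) - pascalQR n).det = 0 := by
    by_contra h
    exact hq ((Matrix.isUnit_iff_isUnit_det _).2 (isUnit_iff_ne_zero.2 h))
  have hmain := main q hq0
  rw [hdet0] at hmain
  have hne : (-1:ℝ)^(n+1) * q^(n+1) ≠ 0 :=
    mul_ne_zero (pow_ne_zero _ (by norm_num)) (pow_ne_zero _ hq0)
  have h2 : ((1/q) • (1 : Matrix (Fin (n+1)) (Fin (n+1)) ℝ) - pascalQR n).det = 0 := by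
    rcases mul_eq_zero.mp hmain.symm with h | h
    · exact absurd h hne
    · exact h
  intro hu
  rw [Matrix.isUnit_iff_isUnit_det] at hu
  exact isUnit_iff_ne_zero.mp hu h2
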